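/- Define K(r, V) = inf over all real random variables Π with E[Π] ≥ r and Var(Π) ≤ V of E[Φ(Π)]. Then K is jointly continuous in (r, V) on ℝ × (0, ∞). -/

import Mathlib

open MeasureTheory ProbabilityTheory

/-- Standard Gaussian density. -/
noncomputable def gaussPDF (x : ℝ) : ℝ := Real.exp (-(x ^ 2) / 2) / Real.sqrt (2 * Real.pi)

/-- Standard Gaussian CDF. -/
noncomputable def gaussCDF (x : ℝ) : ℝ := ∫ t in Set.Iic x, gaussPDF t

/-- `K(r, V)`: infimum of `E[Φ(Π)]` over laws `μ` of real random variables `Π`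
with `E[Π] ≥ r` and `Var(Π) ≤ V`. -/
noncomputable def Kfun (r V : ℝ) : ℝ :=
  sInf { e : ℝ | ∃ μ : Measure ℝ, IsProbabilityMeasure μ ∧ MemLp id 2 μ ∧
    r ≤ ∫ x, x ∂μ ∧ variance id μ ≤ V ∧ e = ∫ x, gaussCDF x ∂μ }

noncomputable def cc : ℝ := (Real.sqrt (2 * Real.pi))⁻¹

lemma cc_pos : 0 < cc := by
  rw [cc]
  positivity

lemma gaussPDF_nonneg (x : ℝ) : 0 ≤ gaussPDF x := by
  rw [gaussPDF]; positivity

lemma gaussPDF_le (x : ℝ) : gaussPDF x ≤ cc := by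
  rw [gaussPDF, cc, div_eq_mul_inv]
  have h1 : Real.exp (-(x ^ 2) / 2) ≤ 1 := by
    rw [Real.exp_le_one_iff]
    nlinarith [sq_nonneg x]
  nlinarith [Real.sqrt_pos.2 (by positivity : (0:ℝ) < 2 * Real.pi), h1,
    inv_nonneg.2 (Real.sqrt_nonneg (2 * Real.pi)), Real.exp_pos (-(x^2)/2)]

lemma integrable_gaussPDF : Integrable gaussPDF := by
  have : gaussPDF = fun x => (Real.sqrt (2 * Real.pi))⁻¹ * Real.exp (-(2⁻¹ : ℝ) * x ^ 2) := by
    funext x; rw [gaussPDF]; ring_nf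
  rw [this]
  exact (integrable_exp_neg_mul_sq (by norm_num)).const_mul _

lemma gaussCDF_mono : Monotone gaussCDF := by
  intro x y hxy
  rw [gaussCDF, gaussCDF]
  apply setIntegral_mono_set integrable_gaussPDF.integrableOn
    (Filter.Eventually.of_forall gaussPDF_nonneg)
  exact HasSubset.Subset.eventuallyLE (Set.Iic_subset_Iic.2 hxy)

lemma gaussCDF_nonneg (x : ℝ) : 0 ≤ gaussCDF x :=
  setIntegral_nonneg measurableSet_Iic (fun t _ => gaussPDF_nonneg t)

lemma gaussCDF_le (x : ℝ) : gaussCDF x ≤ ∫ t, gaussPDF t := by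
  rw [gaussCDF]
  apply setIntegral_le_integral integrable_gaussPDF
    (Filter.Eventually.of_forall gaussPDF_nonneg)

lemma gaussCDF_lip (x y : ℝ) : |gaussCDF x - gaussCDF y| ≤ cc * |x - y| := by
  wlog h : y ≤ x generalizing x y
  · rw [abs_sub_comm, abs_sub_comm x y]; exact this y x (le_of_not_ge h)
  rw [gaussCDF, gaussCDF, intervalIntegral.integral_Iic_sub_Iic
    integrable_gaussPDF.integrableOn integrable_gaussPDF.integrableOn]
  rw [abs_of_nonneg (intervalIntegral.integral_nonneg h (fun t _ => gaussPDF_nonneg t)),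
    abs_of_nonneg (by linarith)]
  calc ∫ t in y..x, gaussPDF t ≤ ∫ t in y..x, cc :=
        intervalIntegral.integral_mono_on h integrable_gaussPDF.intervalIntegrable
          intervalIntegrable_const (fun t _ => gaussPDF_le t)
    _ = cc * (x - y) := by simp [mul_comm]

lemma gaussCDF_continuous : Continuous gaussCDF := by
  have : LipschitzWith (Real.toNNReal cc) gaussCDF := by
    apply LipschitzWith.of_dist_le_mul
    intro x y
    rw [Real.dist_eq, Real.dist_eq, Real.coe_toNNReal _ cc_pos.le]
    exact gaussCDF_lip x y
  exact this.continuous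


noncomputable def Sset (r V : ℝ) : Set ℝ :=
  { e : ℝ | ∃ μ : Measure ℝ, IsProbabilityMeasure μ ∧ MemLp id 2 μ ∧
    r ≤ ∫ x, x ∂μ ∧ variance id μ ≤ V ∧ e = ∫ x, gaussCDF x ∂μ }

lemma Kfun_eq (r V : ℝ) : Kfun r V = sInf (Sset r V) := rfl

lemma Sset_lb {r V : ℝ} : ∀ e ∈ Sset r V, 0 ≤ e := by
  rintro e ⟨μ, hprob, _, _, _, rfl⟩
  exact integral_nonneg gaussCDF_nonneg

lemma Sset_bdd (r V : ℝ) : BddBelow (Sset r V) := ⟨0, Sset_lb⟩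

lemma integrable_gaussCDF_comp {μ : Measure ℝ} [IsFiniteMeasure μ] {f : ℝ → ℝ}
    (hf : Continuous f) : Integrable (fun x => gaussCDF (f x)) μ := by
  apply Integrable.mono' (integrable_const (∫ t, gaussPDF t))
    (gaussCDF_continuous.comp hf).aestronglyMeasurable
  apply Filter.Eventually.of_forall
  intro x
  simp only [Function.comp_apply, Real.norm_eq_abs]
  rw [abs_of_nonneg (gaussCDF_nonneg _)]
  exact gaussCDF_le _

lemma Sset_nonempty (r V : ℝ) (hV : 0 ≤ V) : (Sset r V).Nonempty := by
  have hmem : MemLp id 2 (Measure.dirac r) := by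
    apply (memLp_const r).ae_eq
    rw [Filter.EventuallyEq, MeasureTheory.ae_dirac_eq]
    simp
  refine ⟨gaussCDF r, Measure.dirac r, inferInstance, hmem, ?_, ?_, ?_⟩
  · rw [integral_dirac]
  · rw [variance_eq_sub hmem]
    simp [integral_dirac]
    nlinarith
  · rw [integral_dirac]

set_option maxHeartbeats 1000000 in
lemma key (r r' V V' : ℝ) (hV : 0 < V) (hV' : 0 < V') :
    Kfun r' V' ≤ Kfun r V +
      cc * (|r' - r| + (1 - Real.sqrt (min V V' / V)) * (1 + V) / 2) := by
  set a : ℝ := Real.sqrt (min V V' / V) with ha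
  have ha0 : 0 ≤ a := Real.sqrt_nonneg _
  have hmin0 : (0:ℝ) ≤ min V V' := le_min hV.le hV'.le
  have ha1 : a ≤ 1 := by
    calc a ≤ Real.sqrt 1 := Real.sqrt_le_sqrt (by rw [div_le_one hV]; exact min_le_left _ _)
      _ = 1 := Real.sqrt_one
  have hasq : a ^ 2 = min V V' / V := Real.sq_sqrt (by positivity)
  set B : ℝ := cc * (|r' - r| + (1 - a) * (1 + V) / 2) with hB
  have hstep : ∀ e ∈ Sset r V, Kfun r' V' ≤ e + B := by
    rintro e ⟨μ, hprob, hL2, hmean, hvar, rfl⟩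
    set m : ℝ := ∫ x, x ∂μ with hm
    set b : ℝ := r' - a * m with hbdef
    set f : ℝ → ℝ := fun x => a * x + b with hf
    have hfc : Continuous f := by fun_prop
    have hfm : AEMeasurable f μ := hfc.measurable.aemeasurable
    have hint : Integrable (fun x : ℝ => x) μ := hL2.integrable one_le_two
    have hintsq : Integrable (fun x : ℝ => x ^ 2) μ := hL2.integrable_sq
    have hL2f : MemLp f 2 μ := by
      have : MemLp (fun x => a * id x + b) 2 μ := (hL2.const_mul a).add (memLp_const b)
      exact this
    set ν : Measure ℝ := μ.map f with hν
    have hprobν : IsProbabilityMeasure ν := Measure.isProbabilityMeasure_map hfm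
    have hL2ν : MemLp id 2 ν := by
      rw [hν, memLp_map_measure_iff aestronglyMeasurable_id hfm]
      exact hL2f
    have hintf : ∫ x, f x ∂μ = a * m + b := by
      rw [hf]
      simp only []
      rw [integral_add (hint.const_mul a) (integrable_const b), integral_const_mul,
        integral_const]
      simp [hm]
    have hmeanν : ∫ x, x ∂ν = r' := by
      have h0 : ∫ x, x ∂ν = ∫ x, f x ∂μ := integral_map hfm aestronglyMeasurable_id
      rw [h0, hintf, hbdef]
      ring
    have i1 : Integrable (fun x : ℝ => a ^ 2 * x ^ 2 + 2 * a * b * x) μ :=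
      (hintsq.const_mul _).add (hint.const_mul _)
    have hI2 : ∫ x, f x ^ 2 ∂μ = a ^ 2 * (∫ x, x ^ 2 ∂μ) + 2 * a * b * m + b ^ 2 := by
      have hfe : (fun x => f x ^ 2) = fun x => (a ^ 2 * x ^ 2 + (2 * a * b) * x) + b ^ 2 := by
        funext x; rw [hf]; ring
      rw [hfe, integral_add i1 (integrable_const _),
        integral_add (hintsq.const_mul _) (hint.const_mul _),
        integral_const_mul, integral_const_mul, integral_const]
      simp [hm]
    have hr' : r' = a * m + b := by rw [hbdef]; ring
    have hvarν : variance id ν = a ^ 2 * variance id μ := by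
      rw [variance_eq_sub hL2ν, variance_eq_sub hL2]
      simp only [Pi.pow_apply, id_eq]
      have e1 : ∫ x, x ^ 2 ∂ν = ∫ x, f x ^ 2 ∂μ :=
        integral_map hfm (continuous_pow 2).aestronglyMeasurable
      have e2 : ∫ x, x ∂ν = r' := hmeanν
      rw [e1, e2, hI2, hr', ← hm]
      ring
    have hvarν' : variance id ν ≤ V' := by
      rw [hvarν, hasq]
      calc min V V' / V * variance id μ ≤ min V V' / V * V := by
            apply mul_le_mul_of_nonneg_left hvar (by positivity)
        _ = min V V' := by field_simp
        _ ≤ V' := min_le_right _ _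
    have hpoint : ∀ x : ℝ, gaussCDF (f x) ≤
        gaussCDF x + cc * |r' - r| + cc * (1 - a) * ((1 + (x - m) ^ 2) / 2) := by
      intro x
      have h1 : gaussCDF (f x) - gaussCDF ((x - m) + r) ≤ cc * |f x - ((x - m) + r)| :=
        (le_abs_self _).trans (gaussCDF_lip _ _)
      have h2 : |f x - ((x - m) + r)| ≤ (1 - a) * |x - m| + |r' - r| := by
        have hd : f x - ((x - m) + r) = (a - 1) * (x - m) + (r' - r) := by
          rw [hf, hbdef]; ring
        rw [hd]
        calc |(a - 1) * (x - m) + (r' - r)| ≤ |(a - 1) * (x - m)| + |r' - r| := abs_add_le _ _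
          _ = (1 - a) * |x - m| + |r' - r| := by
              rw [abs_mul, abs_of_nonpos (by linarith : a - 1 ≤ 0)]; ring
      have h3 : |x - m| ≤ (1 + (x - m) ^ 2) / 2 := by
        nlinarith [sq_nonneg (|x - m| - 1), sq_abs (x - m), abs_nonneg (x - m)]
      have h4 : gaussCDF ((x - m) + r) ≤ gaussCDF x := gaussCDF_mono (by linarith)
      have h5 : cc * |f x - ((x - m) + r)| ≤ cc * (1 - a) * |x - m| + cc * |r' - r| := by
        calc cc * |f x - ((x - m) + r)| ≤ cc * ((1 - a) * |x - m| + |r' - r|) :=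
              mul_le_mul_of_nonneg_left h2 cc_pos.le
          _ = cc * (1 - a) * |x - m| + cc * |r' - r| := by ring
      have h6 : cc * (1 - a) * |x - m| ≤ cc * (1 - a) * ((1 + (x - m) ^ 2) / 2) :=
        mul_le_mul_of_nonneg_left h3 (mul_nonneg cc_pos.le (by linarith))
      linarith
    have hintlhs : Integrable (fun x => gaussCDF (f x)) μ := integrable_gaussCDF_comp hfc
    have hintq : Integrable (fun x : ℝ => (x - m) ^ 2) μ := by
      have hq : (fun x : ℝ => (x - m) ^ 2) = fun x => (x ^ 2 - (2 * m) * x) + m ^ 2 := by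
        funext x; ring
      rw [hq]
      exact (hintsq.sub (hint.const_mul _)).add (integrable_const _)
    have hint3 : Integrable (fun x : ℝ => cc * (1 - a) * ((1 + (x - m) ^ 2) / 2)) μ := by
      have hq : (fun x : ℝ => cc * (1 - a) * ((1 + (x - m) ^ 2) / 2))
          = fun x => (cc * (1 - a) / 2) * (x - m) ^ 2 + cc * (1 - a) / 2 := by
        funext x; ring
      rw [hq]
      exact (hintq.const_mul _).add (integrable_const _)
    have hintg : Integrable (fun x : ℝ => gaussCDF x) μ := integrable_gaussCDF_comp continuous_id
    have hintrhs : Integrable (fun x : ℝ =>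
        gaussCDF x + cc * |r' - r| + cc * (1 - a) * ((1 + (x - m) ^ 2) / 2)) μ :=
      ((hintg.add (integrable_const _))).add hint3
    have hVm : ∫ x, (x - m) ^ 2 ∂μ = variance id μ := by
      rw [variance_eq_sub hL2]
      simp only [Pi.pow_apply, id_eq]
      have hq : (fun x : ℝ => (x - m) ^ 2) = fun x => (x ^ 2 - (2 * m) * x) + m ^ 2 := by
        funext x; ring
      have i2 : Integrable (fun x : ℝ => x ^ 2 - 2 * m * x) μ := hintsq.sub (hint.const_mul _)
      rw [hq, integral_add i2 (integrable_const _),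
        integral_sub hintsq (hint.const_mul _), integral_const_mul, integral_const]
      simp [hm]
      ring
    have hIneq : ∫ x, gaussCDF (f x) ∂μ ≤ ∫ x, (gaussCDF x + cc * |r' - r|
        + cc * (1 - a) * ((1 + (x - m) ^ 2) / 2)) ∂μ :=
      integral_mono hintlhs hintrhs hpoint
    have hcomp : ∫ x, (gaussCDF x + cc * |r' - r|
        + cc * (1 - a) * ((1 + (x - m) ^ 2) / 2)) ∂μ
        = (∫ x, gaussCDF x ∂μ) + cc * |r' - r|
          + (cc * (1 - a) / 2) * (∫ x, (x - m) ^ 2 ∂μ) + cc * (1 - a) / 2 := by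
      have i4 : Integrable (fun x : ℝ => gaussCDF x + cc * |r' - r|) μ :=
        hintg.add (integrable_const _)
      rw [integral_add i4 hint3, integral_add hintg (integrable_const _)]
      have hq : (fun x : ℝ => cc * (1 - a) * ((1 + (x - m) ^ 2) / 2))
          = fun x => (cc * (1 - a) / 2) * (x - m) ^ 2 + cc * (1 - a) / 2 := by
        funext x; ring
      rw [hq, integral_add (hintq.const_mul _) (integrable_const _), integral_const_mul,
        integral_const]
      simp [measure_univ]
      rw [integral_const_mul]
      ring
    have hca : 0 ≤ cc * (1 - a) / 2 := by nlinarith [cc_pos]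
    have hmain : ∫ x, gaussCDF (f x) ∂μ ≤ (∫ x, gaussCDF x ∂μ) + B := by
      rw [hB]
      have h7 : (cc * (1 - a) / 2) * (∫ x, (x - m) ^ 2 ∂μ) ≤ (cc * (1 - a) / 2) * V := by
        apply mul_le_mul_of_nonneg_left _ hca
        rw [hVm]; exact hvar
      calc ∫ x, gaussCDF (f x) ∂μ ≤ _ := hIneq
        _ = _ := hcomp
        _ ≤ (∫ x, gaussCDF x ∂μ) + cc * |r' - r|
              + (cc * (1 - a) / 2) * V + cc * (1 - a) / 2 := by linarith [h7]
        _ = (∫ x, gaussCDF x ∂μ) + cc * (|r' - r| + (1 - a) * (1 + V) / 2) := by ring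
    have hobj : ∫ x, gaussCDF x ∂ν = ∫ x, gaussCDF (f x) ∂μ :=
      integral_map hfm gaussCDF_continuous.aestronglyMeasurable
    calc Kfun r' V' ≤ ∫ x, gaussCDF x ∂ν :=
          csInf_le (Sset_bdd r' V') ⟨ν, hprobν, hL2ν, hmeanν.ge, hvarν', rfl⟩
      _ ≤ _ := by rw [hobj]; exact hmain
  have hne := Sset_nonempty r V hV.le
  have hfin : Kfun r' V' - B ≤ Kfun r V := by
    rw [Kfun_eq r V]
    apply le_csInf hne
    intro e he
    linarith [hstep e he]
  linarith

lemma term_nonneg (r r' V V' : ℝ) (hV : 0 < V) (hV' : 0 < V') :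
    0 ≤ cc * (|r' - r| + (1 - Real.sqrt (min V V' / V)) * (1 + V) / 2) := by
  have h1 : Real.sqrt (min V V' / V) ≤ 1 := by
    calc Real.sqrt (min V V' / V) ≤ Real.sqrt 1 :=
          Real.sqrt_le_sqrt (by rw [div_le_one hV]; exact min_le_left _ _)
      _ = 1 := Real.sqrt_one
  have h2 : (0:ℝ) ≤ |r' - r| := abs_nonneg _
  apply mul_nonneg cc_pos.le
  apply add_nonneg h2
  apply div_nonneg (mul_nonneg (by linarith) (by linarith)) (by norm_num)

/-- `K` is jointly continuous in `(r, V)` on `ℝ × (0, ∞)`. -/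
theorem stmt3 :
    ContinuousOn (fun p : ℝ × ℝ => Kfun p.1 p.2) (Set.univ ×ˢ Set.Ioi (0 : ℝ)) := by
  intro p hp
  have hV : 0 < p.2 := hp.2
  set s := Set.univ ×ˢ Set.Ioi (0:ℝ) with hs
  set h : ℝ × ℝ → ℝ := fun q =>
    cc * (|q.1 - p.1| + (1 - Real.sqrt (min p.2 q.2 / p.2)) * (1 + p.2) / 2)
    + cc * (|p.1 - q.1| + (1 - Real.sqrt (min q.2 p.2 / q.2)) * (1 + q.2) / 2) with hh
  have hbound : ∀ q ∈ s, |Kfun q.1 q.2 - Kfun p.1 p.2| ≤ h q := by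
    intro q hq
    have hq2 : 0 < q.2 := hq.2
    have k1 := key p.1 q.1 p.2 q.2 hV hq2
    have k2 := key q.1 p.1 q.2 p.2 hq2 hV
    have t1 := term_nonneg p.1 q.1 p.2 q.2 hV hq2
    have t2 := term_nonneg q.1 p.1 q.2 p.2 hq2 hV
    rw [hh]
    rw [abs_le]
    constructor
    · simp only []
      linarith
    · simp only []
      linarith
  have hp0 : h p = 0 := by
    rw [hh]
    simp [min_self, div_self hV.ne', Real.sqrt_one]
  have hcont : ContinuousWithinAt h s p := by
    apply ContinuousAt.continuousWithinAt
    have c1 : ContinuousAt (fun q : ℝ × ℝ => min p.2 q.2 / p.2) p :=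
      ((continuousAt_const.min continuous_snd.continuousAt).div_const _)
    have c2 : ContinuousAt (fun q : ℝ × ℝ => min q.2 p.2 / q.2) p :=
      (continuous_snd.continuousAt.min continuousAt_const).div
        continuous_snd.continuousAt hV.ne'
    have csq1 : ContinuousAt (fun q : ℝ × ℝ => Real.sqrt (min p.2 q.2 / p.2)) p :=
      Real.continuous_sqrt.continuousAt.comp c1
    have csq2 : ContinuousAt (fun q : ℝ × ℝ => Real.sqrt (min q.2 p.2 / q.2)) p :=
      Real.continuous_sqrt.continuousAt.comp c2
    have cabs1 : ContinuousAt (fun q : ℝ × ℝ => |q.1 - p.1|) p :=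
      (continuous_abs.comp (continuous_fst.sub continuous_const)).continuousAt
    have cabs2 : ContinuousAt (fun q : ℝ × ℝ => |p.1 - q.1|) p :=
      (continuous_abs.comp (continuous_const.sub continuous_fst)).continuousAt
    rw [hh]
    apply ContinuousAt.add
    · exact continuousAt_const.mul (cabs1.add
        (((continuousAt_const.sub csq1).mul continuousAt_const).div_const _))
    · exact continuousAt_const.mul (cabs2.add
        (((continuousAt_const.sub csq2).mul
          (continuousAt_const.add continuous_snd.continuousAt)).div_const _))
  have htend : Filter.Tendsto h (nhdsWithin p s) (nhds 0) := by
    have := hcont.tendsto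
    rwa [hp0] at this
  rw [ContinuousWithinAt, tendsto_iff_dist_tendsto_zero]
  apply squeeze_zero' (Filter.Eventually.of_forall fun q => dist_nonneg) _ htend
  filter_upwards [eventually_mem_nhdsWithin] with q hq
  rw [Real.dist_eq]
  exact hbound q hq
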